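/- Let f : C_n → ℝ with Lip(f) = L and let h : ℝ → ℝ be twice differentiable with |h''(x)| < B for all x ∈ ℝ. Then for every x ∈ [−1,1]^n, ‖∇(h∘f)(x) − h'(f(x))·∇f(x)‖₁ ≤ 2 B L² n^{3/2}, where f, ∇f, and ∇(h∘f) are evaluated at x via their multilinear extensions. -/

import Mathlib

open MeasureTheory

noncomputable section

namespace Paper

/-- The Boolean hypercube `{-1,1}^n` as a finite set of vectors in `ℝ^n`. -/
def cube (n : ℕ) : Finset (Fin n → ℝ) := Fintype.piFinset fun _ => ({-1, 1} : Finset ℝ)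

/-- The ℓ¹ norm of a vector. -/
def onorm {n : ℕ} (v : Fin n → ℝ) : ℝ := ∑ i, |v i|

/-- The Euclidean (ℓ²) norm of a vector. -/
def tnorm {n : ℕ} (v : Fin n → ℝ) : ℝ := Real.sqrt (∑ i, (v i) ^ 2)

/-- Discrete derivative of `f` at coordinate `i`. -/
def dd {n : ℕ} (f : (Fin n → ℝ) → ℝ) (i : Fin n) (y : Fin n → ℝ) : ℝ :=
  (f (Function.update y i 1) - f (Function.update y i (-1))) / 2

/-- Discrete gradient of `f`. -/
def dgrad {n : ℕ} (f : (Fin n → ℝ) → ℝ) (y : Fin n → ℝ) : Fin n → ℝ := fun i => dd f i y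

/-- The multilinear (harmonic) extension of `f : C_n → ℝ` to `[-1,1]^n`. -/
def mlext {n : ℕ} (f : (Fin n → ℝ) → ℝ) (x : Fin n → ℝ) : ℝ :=
  ∑ S : Finset (Fin n),
    (((2 : ℝ) ^ n)⁻¹ * ∑ y ∈ cube n, f y * ∏ i ∈ S, y i) * ∏ i ∈ S, x i

/-- The multilinear extension of the discrete gradient of `f`. -/
def mlgrad {n : ℕ} (f : (Fin n → ℝ) → ℝ) (x : Fin n → ℝ) : Fin n → ℝ :=
  fun i => mlext (dd f i) x

/-- The Lipschitz constant `Lip(f) = max_{i,y∈C_n} |∂_i f(y)|`. -/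
def lip {n : ℕ} (f : (Fin n → ℝ) → ℝ) : ℝ :=
  sSup {a | ∃ i : Fin n, ∃ y ∈ cube n, a = |dd f i y|}

/-- The Lipschitz constant of the discrete gradient:
`max_{x ≠ y ∈ C_n} ‖∇f(x) - ∇f(y)‖₁ / ‖x - y‖₁`. -/
def gradLip {n : ℕ} (f : (Fin n → ℝ) → ℝ) : ℝ :=
  sSup {a | ∃ x ∈ cube n, ∃ y ∈ cube n, x ≠ y ∧
    a = onorm (dgrad f x - dgrad f y) / onorm (x - y)}

/-- Gaussian width of a set `K ⊆ ℝ^n`. -/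
def gaussianWidth {n : ℕ} (K : Set (Fin n → ℝ)) : ℝ :=
  ∫ θ, sSup ((fun v => ∑ i, v i * θ i) '' K)
    ∂(Measure.pi fun _ : Fin n => ProbabilityTheory.gaussianReal 0 1)

/-- Gradient complexity `D(f) = GW({∇f(y) : y ∈ C_n} ∪ {0})`. -/
def gradComplexity {n : ℕ} (f : (Fin n → ℝ) → ℝ) : ℝ :=
  gaussianWidth ((dgrad f '' (cube n : Set (Fin n → ℝ))) ∪ {0})

/-- The Gibbs distribution with Hamiltonian `f`, as a weight function on `ℝ^n`
supported on the cube. -/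
def gibbs {n : ℕ} (f : (Fin n → ℝ) → ℝ) (y : Fin n → ℝ) : ℝ :=
  if y ∈ cube n then Real.exp (f y) / ∑ z ∈ cube n, Real.exp (f z) else 0

/-- The tilt `τ_θ p` of a weight function `p` on the cube. -/
def tilt {n : ℕ} (p : (Fin n → ℝ) → ℝ) (θ : Fin n → ℝ) (y : Fin n → ℝ) : ℝ :=
  p y * Real.exp (∑ i, θ i * y i) / ∑ z ∈ cube n, p z * Real.exp (∑ i, θ i * z i)

/-- The mean (center of mass) of the tilted measure `τ_θ p`. -/
def tiltMean {n : ℕ} (p : (Fin n → ℝ) → ℝ) (θ : Fin n → ℝ) : Fin n → ℝ :=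
  fun i => ∑ y ∈ cube n, tilt p θ y * y i

/-- A weight function on the cube is a product measure: the coordinates are
independent Bernoulli-type variables. -/
def IsProduct {n : ℕ} (ξ : (Fin n → ℝ) → ℝ) : Prop :=
  (∀ y, y ∉ cube n → ξ y = 0) ∧
  ∃ q : Fin n → ℝ, (∀ i, q i ∈ Set.Icc (0 : ℝ) 1) ∧
    ∀ y ∈ cube n, ξ y = ∏ i, (if y i = 1 then q i else 1 - q i)

/-- The Wasserstein (transportation) distance between two weight functions on the cube. -/
def W1 {n : ℕ} (p q : (Fin n → ℝ) → ℝ) : ℝ :=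
  sInf {w | ∃ π : (Fin n → ℝ) × (Fin n → ℝ) → ℝ,
    (∀ a, 0 ≤ π a) ∧
    (∀ x, ∑ y ∈ cube n, π (x, y) = p x) ∧
    (∀ y, ∑ x ∈ cube n, π (x, y) = q y) ∧
    w = (1 / 2) * ∑ x ∈ cube n, ∑ y ∈ cube n, π (x, y) * onorm (x - y)}

/-- `p` (the law of a random vector on the cube) is a `(ρ,δ,ε)`-tilt-mixture. -/
def IsTiltMixture {n : ℕ} (p : (Fin n → ℝ) → ℝ) (ρ : Measure (Fin n → ℝ))
    (δ ε : ℝ) : Prop :=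
  ∃ m : Measure (Fin n → ℝ), IsProbabilityMeasure m ∧
    m {θ | ¬ (tnorm θ ≤ ε * Real.sqrt n ∧ ∀ i, |θ i| ≤ 1 / 4)} = 0 ∧
    (∀ φ : (Fin n → ℝ) → ℝ,
      ∑ y ∈ cube n, φ y * p y = ∫ θ, ∑ y ∈ cube n, φ y * tilt p θ y ∂m) ∧
    ENNReal.ofReal (1 - δ) <
      m {θ | ∃ ξ, IsProduct ξ ∧ W1 (tilt p θ) ξ ≤ δ * n} ∧
    ρ = m.map (tiltMean p)

/-- The product weight on the cube with mean vector `z ∈ [-1,1]^n`: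
the law of `X(z)`. -/
def prodW {n : ℕ} (z : Fin n → ℝ) (y : Fin n → ℝ) : ℝ := ∏ i, (1 + y i * z i) / 2

/-- `q` (the law of a random vector `X` on the cube) is a `(ρ,δ)`-mixture:
there is a coupling of `X(ρ)` and `X` with `E‖X(ρ) - X‖₁ ≤ δ n`. -/
def IsMixture {n : ℕ} (q : (Fin n → ℝ) → ℝ) (ρ : Measure (Fin n → ℝ)) (δ : ℝ) : Prop :=
  ∃ π : (Fin n → ℝ) × (Fin n → ℝ) → ℝ,
    (∀ a, 0 ≤ π a) ∧
    (∀ x ∈ cube n, ∑ y ∈ cube n, π (x, y) = ∫ z, prodW z x ∂ρ) ∧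
    (∀ y, ∑ x ∈ cube n, π (x, y) = q y) ∧
    ∑ x ∈ cube n, ∑ y ∈ cube n, π (x, y) * onorm (x - y) ≤ δ * n

/-- `f_ν = log(dν/dμ)` for a weight function `p` on the cube (`μ` uniform). -/
def hamOf {n : ℕ} (p : (Fin n → ℝ) → ℝ) : (Fin n → ℝ) → ℝ :=
  fun y => Real.log ((2 : ℝ) ^ n * p y)

/-- `Tr(H(ν))` for a weight function `p` on the cube. -/
def traceH {n : ℕ} (p : (Fin n → ℝ) → ℝ) : ℝ :=
  ∑ i, ((∑ y ∈ cube n, p y * (Real.tanh (dd (hamOf p) i y)) ^ 2) -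
    (∑ y ∈ cube n, p y * Real.tanh (dd (hamOf p) i y)) ^ 2)


lemma mem_cube {n : ℕ} {y : Fin n → ℝ} : y ∈ cube n ↔ ∀ i, y i = -1 ∨ y i = 1 := by
  simp [cube, Fintype.mem_piFinset]

lemma one_mem_cube {n : ℕ} : (fun _ => (1:ℝ)) ∈ cube n := mem_cube.2 fun i => Or.inr rfl

lemma sq_cube {n : ℕ} {y : Fin n → ℝ} (hy : y ∈ cube n) (i : Fin n) : y i * y i = 1 := by
  rcases mem_cube.1 hy i with h | h <;> rw [h] <;> norm_num

lemma sum_subsets {n : ℕ} (a : Fin n → ℝ) :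
    ∑ S : Finset (Fin n), ∏ i ∈ S, a i = ∏ i, (1 + a i) := by
  have := Finset.prod_add a (fun _ => (1:ℝ)) Finset.univ
  simp only [Finset.prod_const_one, mul_one, Finset.powerset_univ] at this
  rw [← this]
  exact Finset.prod_congr rfl fun i _ => by ring

lemma lemA {n : ℕ} (g : (Fin n → ℝ) → ℝ) (x : Fin n → ℝ) :
    mlext g x = ∑ y ∈ cube n, prodW x y * g y := by
  unfold mlext
  have h1 : ∀ S : Finset (Fin n),
      (((2 : ℝ) ^ n)⁻¹ * ∑ y ∈ cube n, g y * ∏ i ∈ S, y i) * ∏ i ∈ S, x i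
      = ∑ y ∈ cube n, ((2 : ℝ) ^ n)⁻¹ * g y * ∏ i ∈ S, (y i * x i) := by
    intro S
    rw [Finset.mul_sum, Finset.sum_mul]
    refine Finset.sum_congr rfl fun y _ => ?_
    rw [Finset.prod_mul_distrib]; ring
  rw [Finset.sum_congr rfl fun S _ => h1 S, Finset.sum_comm]
  refine Finset.sum_congr rfl fun y _ => ?_
  rw [← Finset.mul_sum, sum_subsets]
  unfold prodW
  rw [show (∏ i, (1 + y i * x i) / 2) = (∏ i, (1 + y i * x i)) / (2:ℝ)^n by
    rw [Finset.prod_div_distrib, Finset.prod_const, Finset.card_univ, Fintype.card_fin]]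
  field_simp

lemma sum_prodW {n : ℕ} (x : Fin n → ℝ) : ∑ y ∈ cube n, prodW x y = 1 := by
  unfold prodW cube
  have h := Finset.prod_univ_sum (fun _ : Fin n => ({-1,1} : Finset ℝ))
    (fun i s => (1 + s * x i)/2)
  rw [← h, Finset.prod_eq_one]
  intro i _
  rw [show ({-1,1} : Finset ℝ) = insert (-1) {1} from rfl]
  rw [Finset.sum_insert (by norm_num), Finset.sum_singleton]
  ring

lemma prodW_nonneg {n : ℕ} {x y : Fin n → ℝ} (hx : ∀ i, |x i| ≤ 1) (hy : y ∈ cube n) :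
    0 ≤ prodW x y := by
  refine Finset.prod_nonneg fun i _ => ?_
  have := abs_le.1 (hx i)
  rcases mem_cube.1 hy i with h | h <;> rw [h] <;> nlinarith [this.1, this.2]

lemma mlext_bound {n : ℕ} {g : (Fin n → ℝ) → ℝ} {x : Fin n → ℝ} {C : ℝ}
    (hx : ∀ i, |x i| ≤ 1) (hg : ∀ y ∈ cube n, |g y| ≤ C) : |mlext g x| ≤ C := by
  rw [lemA]
  calc |∑ y ∈ cube n, prodW x y * g y| ≤ ∑ y ∈ cube n, |prodW x y * g y| :=
        Finset.abs_sum_le_sum_abs _ _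
    _ ≤ ∑ y ∈ cube n, prodW x y * C := by
        refine Finset.sum_le_sum fun y hy => ?_
        rw [abs_mul, abs_of_nonneg (prodW_nonneg hx hy)]
        exact mul_le_mul_of_nonneg_left (hg y hy) (prodW_nonneg hx hy)
    _ = C := by rw [← Finset.sum_mul, sum_prodW, one_mul]


lemma update_mem_cube {n : ℕ} {y : Fin n → ℝ} (hy : y ∈ cube n) (κ : Fin n) {s : ℝ}
    (hs : s = -1 ∨ s = 1) : Function.update y κ s ∈ cube n := by
  rw [mem_cube] at *
  intro i
  rcases eq_or_ne i κ with rfl | h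
  · rwa [Function.update_self]
  · rw [Function.update_of_ne h]; exact hy i

lemma SL {n : ℕ} (g : (Fin n → ℝ) → ℝ) (κ : Fin n) :
    ∑ y ∈ cube n, g y
      = (1/2) * ∑ y ∈ cube n, (g (Function.update y κ 1) + g (Function.update y κ (-1))) := by
  have key : ∑ y ∈ cube n, (g (Function.update y κ 1) + g (Function.update y κ (-1)))
      = ∑ y ∈ cube n, (g y + g (Function.update y κ (-(y κ)))) := by
    refine Finset.sum_congr rfl fun y hy => ?_
    rcases mem_cube.1 hy κ with h | h
    · have h1 : Function.update y κ (-(y κ)) = Function.update y κ 1 := by rw [h]; norm_num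
      have h2 : Function.update y κ (-1 : ℝ) = y := by rw [← h]; exact Function.update_eq_self κ y
      rw [h1, h2]; ring
    · have h1 : Function.update y κ (-(y κ)) = Function.update y κ (-1) := by rw [h]
      have h2 : Function.update y κ (1 : ℝ) = y := by rw [← h]; exact Function.update_eq_self κ y
      rw [h1, h2]
  have inv : ∑ y ∈ cube n, g (Function.update y κ (-(y κ))) = ∑ y ∈ cube n, g y := by
    refine Finset.sum_nbij' (fun y => Function.update y κ (-(y κ)))
      (fun y => Function.update y κ (-(y κ))) ?_ ?_ ?_ ?_ ?_
    · intro y hy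
      refine update_mem_cube hy κ ?_
      rcases mem_cube.1 hy κ with h | h <;> rw [h] <;> [right; left] <;> norm_num
    · intro y hy
      refine update_mem_cube hy κ ?_
      rcases mem_cube.1 hy κ with h | h <;> rw [h] <;> [right; left] <;> norm_num
    · intro y _
      simp [Function.update_self, Function.update_idem, neg_neg, Function.update_eq_self]
    · intro y _
      simp [Function.update_self, Function.update_idem, neg_neg, Function.update_eq_self]
    · intro y _; rfl
  rw [key, Finset.sum_add_distrib, inv]
  ring

/-- The partial product skipping coordinate κ. -/
def Pr {n : ℕ} (x y : Fin n → ℝ) (κ : Fin n) : ℝ :=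
  ∏ i ∈ Finset.univ.erase κ, (1 + y i * x i) / 2

lemma prodW_eq {n : ℕ} (x y : Fin n → ℝ) (κ : Fin n) :
    prodW x y = ((1 + y κ * x κ)/2) * Pr x y κ := by
  rw [prodW, Pr, ← Finset.mul_prod_erase Finset.univ _ (Finset.mem_univ κ)]

lemma Pr_update_right {n : ℕ} (x y : Fin n → ℝ) (κ : Fin n) (s : ℝ) :
    Pr x (Function.update y κ s) κ = Pr x y κ := by
  refine Finset.prod_congr rfl fun i hi => ?_
  rw [Function.update_of_ne (Finset.ne_of_mem_erase hi)]

lemma Pr_update_left {n : ℕ} (x y : Fin n → ℝ) (κ : Fin n) (t : ℝ) :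
    Pr (Function.update x κ t) y κ = Pr x y κ := by
  refine Finset.prod_congr rfl fun i hi => ?_
  rw [Function.update_of_ne (Finset.ne_of_mem_erase hi)]

lemma prodW_update_right {n : ℕ} (x y : Fin n → ℝ) (κ : Fin n) (s : ℝ) :
    prodW x (Function.update y κ s) = ((1 + s * x κ)/2) * Pr x y κ := by
  rw [prodW_eq x _ κ, Function.update_self, Pr_update_right]

lemma prodW_update_left {n : ℕ} (x y : Fin n → ℝ) (κ : Fin n) (t : ℝ) :
    prodW (Function.update x κ t) y = ((1 + y κ * t)/2) * Pr x y κ := by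
  rw [prodW_eq _ y κ, Function.update_self, Pr_update_left]

lemma prodW_delta {n : ℕ} {y z : Fin n → ℝ} (hy : y ∈ cube n) (hz : z ∈ cube n) :
    prodW y z = if z = y then 1 else 0 := by
  split_ifs with h
  · subst h
    rw [prodW, Finset.prod_eq_one]
    intro i _
    rcases mem_cube.1 hz i with h | h <;> rw [h] <;> norm_num
  · obtain ⟨i, hi⟩ : ∃ i, z i ≠ y i := by
      by_contra hc
      push_neg at hc
      exact h (funext hc)
    rw [prodW]
    refine Finset.prod_eq_zero (Finset.mem_univ i) ?_
    rcases mem_cube.1 hz i with h1 | h1 <;> rcases mem_cube.1 hy i with h2 | h2 <;>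
      first
        | (exfalso; rw [h1, h2] at hi; exact hi rfl)
        | (rw [h1, h2]; norm_num)

lemma mlext_cube {n : ℕ} (g : (Fin n → ℝ) → ℝ) {y : Fin n → ℝ} (hy : y ∈ cube n) :
    mlext g y = g y := by
  rw [lemA]
  rw [Finset.sum_eq_single y]
  · rw [prodW_delta hy hy, if_pos rfl, one_mul]
  · intro z hz hne
    rw [prodW_delta hy hz, if_neg hne, zero_mul]
  · intro hy'; exact absurd hy hy'

def Aq {n : ℕ} (f : (Fin n → ℝ) → ℝ) (x : Fin n → ℝ) (κ : Fin n) : ℝ :=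
  ∑ u ∈ cube n, ((1/2) * Pr x u κ) * f u
def Sq {n : ℕ} (f : (Fin n → ℝ) → ℝ) (x : Fin n → ℝ) (κ : Fin n) : ℝ :=
  ∑ u ∈ cube n, ((u κ / 2) * Pr x u κ) * f u

lemma AF {n : ℕ} (f : (Fin n → ℝ) → ℝ) (x : Fin n → ℝ) (κ : Fin n) (t : ℝ) :
    mlext f (Function.update x κ t) = Aq f x κ + t * Sq f x κ := by
  rw [lemA]
  simp only [prodW_update_left]
  rw [Finset.sum_congr rfl (fun u _ => show ((1 + u κ * t)/2 * Pr x u κ) * f u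
      = ((1/2) * Pr x u κ) * f u + t * (((u κ / 2) * Pr x u κ) * f u) from by ring)]
  rw [Finset.sum_add_distrib, ← Finset.mul_sum]
  rfl

lemma Aq_update {n : ℕ} (f : (Fin n → ℝ) → ℝ) (x : Fin n → ℝ) (κ : Fin n) (t : ℝ) :
    Aq f (Function.update x κ t) κ = Aq f x κ := by
  unfold Aq; simp only [Pr_update_left]

lemma Sq_update {n : ℕ} (f : (Fin n → ℝ) → ℝ) (x : Fin n → ℝ) (κ : Fin n) (t : ℝ) :
    Sq f (Function.update x κ t) κ = Sq f x κ := by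
  unfold Sq; simp only [Pr_update_left]

lemma Sq_eq_mlext_dd {n : ℕ} (f : (Fin n → ℝ) → ℝ) (x : Fin n → ℝ) (κ : Fin n) :
    Sq f x κ = mlext (dd f κ) (Function.update x κ 0) := by
  rw [lemA, Sq, SL (fun u => ((u κ / 2) * Pr x u κ) * f u) κ,
      SL (fun u => prodW (Function.update x κ 0) u * dd f κ u) κ]
  congr 1
  refine Finset.sum_congr rfl fun u _ => ?_
  simp only [Function.update_self, Pr_update_right, prodW_update_right, Pr_update_left, dd]
  have h1 : Function.update (Function.update u κ (1:ℝ)) κ (1:ℝ) = Function.update u κ 1 :=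
    Function.update_idem ..
  have h2 : Function.update (Function.update u κ (1:ℝ)) κ (-1:ℝ) = Function.update u κ (-1) :=
    Function.update_idem ..
  have h3 : Function.update (Function.update u κ (-1:ℝ)) κ (1:ℝ) = Function.update u κ 1 :=
    Function.update_idem ..
  have h4 : Function.update (Function.update u κ (-1:ℝ)) κ (-1:ℝ) = Function.update u κ (-1) :=
    Function.update_idem ..
  rw [h1, h2, h3, h4]
  ring

lemma Ezero {n : ℕ} (x : Fin n → ℝ) (κ : Fin n) (c : (Fin n → ℝ) → ℝ)
    (hc : ∀ y s, c (Function.update y κ s) = c y) :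
    ∑ y ∈ cube n, prodW x y * (c y * (y κ - x κ)) = 0 := by
  rw [SL (fun y => prodW x y * (c y * (y κ - x κ))) κ]
  rw [show ∑ y ∈ cube n,
      ((fun y => prodW x y * (c y * (y κ - x κ))) (Function.update y κ 1)
        + (fun y => prodW x y * (c y * (y κ - x κ))) (Function.update y κ (-1))) = 0 from ?_]
  · ring
  rw [Finset.sum_eq_zero]
  intro y _
  simp only [prodW_update_right, Function.update_self, hc]
  ring

/-- Partial merge: coordinates `< k` from `y`, the rest from `x`. -/
def mg {n : ℕ} (k : ℕ) (x y : Fin n → ℝ) : Fin n → ℝ := fun i => if (i : ℕ) < k then y i else x i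

lemma mg_zero {n : ℕ} (x y : Fin n → ℝ) : mg 0 x y = x := by
  funext i; simp [mg]

lemma mg_n {n : ℕ} (x y : Fin n → ℝ) : mg n x y = y := by
  funext i; simp [mg, i.isLt]

lemma mg_succ {n : ℕ} (x y : Fin n → ℝ) (κ : Fin n) :
    mg (κ.val + 1) x y = Function.update (mg κ.val x y) κ (y κ) := by
  funext i
  rcases eq_or_ne i κ with rfl | h
  · simp [mg, Function.update_self]
  · rw [Function.update_of_ne h]
    have : (i : ℕ) ≠ (κ : ℕ) := fun hc => h (Fin.ext hc)
    simp only [mg]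
    rcases lt_or_ge (i : ℕ) (κ : ℕ) with h1 | h1
    · rw [if_pos (by omega), if_pos h1]
    · rw [if_neg (by omega), if_neg (by omega)]

lemma mg_self {n : ℕ} (x y : Fin n → ℝ) (κ : Fin n) :
    mg κ.val x y = Function.update (mg κ.val x y) κ (x κ) := by
  funext i
  rcases eq_or_ne i κ with rfl | h
  · simp [mg, Function.update_self]
  · rw [Function.update_of_ne h]

lemma mg_update {n : ℕ} (x y : Fin n → ℝ) (κ : Fin n) (s : ℝ) :
    mg κ.val x (Function.update y κ s) = mg κ.val x y := by
  funext i
  simp only [mg]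
  rcases lt_or_ge (i : ℕ) (κ : ℕ) with h1 | h1
  · rw [if_pos h1, if_pos h1, Function.update_of_ne (fun hc => by subst hc; omega)]
  · rw [if_neg (by omega), if_neg (by omega)]

lemma mg_box {n : ℕ} {x : Fin n → ℝ} (hx : ∀ i, |x i| ≤ 1) {y : Fin n → ℝ} (hy : y ∈ cube n)
    (k : ℕ) : ∀ i, |mg k x y i| ≤ 1 := by
  intro i
  simp only [mg]
  split_ifs
  · rcases mem_cube.1 hy i with h | h <;> rw [h] <;> norm_num
  · exact hx i

section StepSec
variable {n : ℕ} {f : (Fin n → ℝ) → ℝ} {x : Fin n → ℝ} {L : ℝ}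

lemma step (hx : ∀ i, |x i| ≤ 1) (hLb : ∀ (i : Fin n), ∀ y ∈ cube n, |dd f i y| ≤ L)
    (κ : Fin n) :
    ∑ y ∈ cube n, prodW x y * (mlext f (mg (κ.val + 1) x y))^2
      ≤ ∑ y ∈ cube n, prodW x y * (mlext f (mg κ.val x y))^2 + L^2 := by
  set A : (Fin n → ℝ) → ℝ := fun y => Aq f (mg κ.val x y) κ with hA
  set S : (Fin n → ℝ) → ℝ := fun y => Sq f (mg κ.val x y) κ with hS
  have repr1 : ∀ y, mlext f (mg (κ.val + 1) x y) = A y + y κ * S y := by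
    intro y; rw [mg_succ, AF]
  have repr0 : ∀ y, mlext f (mg κ.val x y) = A y + x κ * S y := by
    intro y
    conv_lhs => rw [mg_self x y κ]
    rw [AF]
  have Sbound : ∀ y ∈ cube n, |S y| ≤ L := by
    intro y hy
    rw [hS]
    simp only
    rw [Sq_eq_mlext_dd]
    refine mlext_bound ?_ (hLb κ)
    intro i
    rcases eq_or_ne i κ with rfl | h
    · simp [Function.update_self]
    · rw [Function.update_of_ne h]; exact mg_box hx hy _ i
  have key : ∑ y ∈ cube n, prodW x y * (mlext f (mg (κ.val + 1) x y))^2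
      = ∑ y ∈ cube n, prodW x y * (mlext f (mg κ.val x y))^2
        + ∑ y ∈ cube n, prodW x y * ((1 - x κ ^ 2) * (S y)^2)
        + ∑ y ∈ cube n, prodW x y * ((2 * A y * S y) * (y κ - x κ)) := by
    rw [← Finset.sum_add_distrib, ← Finset.sum_add_distrib]
    refine Finset.sum_congr rfl fun y hy => ?_
    rw [repr1 y, repr0 y]
    have hyk : y κ * y κ = 1 := sq_cube hy κ
    linear_combination prodW x y * (S y)^2 * hyk
  rw [key, Ezero x κ (fun y => 2 * A y * S y) ?_]
  · have h2 : ∑ y ∈ cube n, prodW x y * ((1 - x κ ^ 2) * (S y)^2) ≤ L^2 := by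
      have hx2 : x κ ^ 2 ≤ 1 := by
        have := hx κ; nlinarith [abs_nonneg (x κ), le_abs_self (x κ), neg_abs_le (x κ)]
      calc ∑ y ∈ cube n, prodW x y * ((1 - x κ ^ 2) * (S y)^2)
          ≤ ∑ y ∈ cube n, prodW x y * L^2 := by
            refine Finset.sum_le_sum fun y hy => ?_
            refine mul_le_mul_of_nonneg_left ?_ (prodW_nonneg hx hy)
            have h3 : (S y)^2 ≤ L^2 := by
              have := Sbound y hy
              have := abs_nonneg (S y)
              nlinarith [le_abs_self (S y), neg_abs_le (S y)]
            nlinarith [sq_nonneg (S y)]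
        _ = L^2 := by rw [← Finset.sum_mul, sum_prodW, one_mul]
    linarith
  · intro y s
    simp only [hA, hS, mg_update]

lemma tele (hx : ∀ i, |x i| ≤ 1) (hLb : ∀ (i : Fin n), ∀ y ∈ cube n, |dd f i y| ≤ L) :
    ∀ k, k ≤ n →
      ∑ y ∈ cube n, prodW x y * (mlext f (mg k x y))^2 ≤ (mlext f x)^2 + k * L^2 := by
  intro k
  induction k with
  | zero =>
    intro _
    simp only [mg_zero, Nat.cast_zero, zero_mul, add_zero]
    rw [← Finset.sum_mul, sum_prodW, one_mul]
  | succ k ih =>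
    intro hk
    have hkn : k < n := by omega
    have := step hx hLb ⟨k, hkn⟩
    simp only at this
    calc ∑ y ∈ cube n, prodW x y * (mlext f (mg (k+1) x y))^2
        ≤ ∑ y ∈ cube n, prodW x y * (mlext f (mg k x y))^2 + L^2 := this
      _ ≤ (mlext f x)^2 + k * L^2 + L^2 := by linarith [ih (by omega)]
      _ = (mlext f x)^2 + (k+1 : ℕ) * L^2 := by push_cast; ring

lemma variance (hx : ∀ i, |x i| ≤ 1) (hLb : ∀ (i : Fin n), ∀ y ∈ cube n, |dd f i y| ≤ L) :
    ∑ y ∈ cube n, prodW x y * (f y - mlext f x)^2 ≤ n * L^2 := by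
  have h1 := tele hx hLb n le_rfl
  have h2 : ∑ y ∈ cube n, prodW x y * (mlext f (mg n x y))^2
      = ∑ y ∈ cube n, prodW x y * (f y)^2 := by
    refine Finset.sum_congr rfl fun y hy => ?_
    rw [mg_n, mlext_cube f hy]
  have h3 : ∑ y ∈ cube n, prodW x y * f y = mlext f x := (lemA f x).symm
  have h4 : ∑ y ∈ cube n, prodW x y * (f y - mlext f x)^2
      = ∑ y ∈ cube n, prodW x y * (f y)^2
        - 2 * mlext f x * (∑ y ∈ cube n, prodW x y * f y)
        + (mlext f x)^2 * ∑ y ∈ cube n, prodW x y := by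
    rw [Finset.mul_sum, Finset.mul_sum, ← Finset.sum_sub_distrib, ← Finset.sum_add_distrib]
    exact Finset.sum_congr rfl fun y _ => by ring
  rw [h2] at h1
  rw [h4, h3, sum_prodW]
  nlinarith [h1]

lemma absdev (hx : ∀ i, |x i| ≤ 1) (hLb : ∀ (i : Fin n), ∀ y ∈ cube n, |dd f i y| ≤ L)
    (hL0 : 0 ≤ L) :
    ∑ y ∈ cube n, prodW x y * |f y - mlext f x| ≤ Real.sqrt n * L := by
  have cs := Finset.sum_mul_sq_le_sq_mul_sq (cube n)
    (fun y => Real.sqrt (prodW x y)) (fun y => Real.sqrt (prodW x y) * |f y - mlext f x|)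
  have e1 : ∀ y ∈ cube n, Real.sqrt (prodW x y) * (Real.sqrt (prodW x y) * |f y - mlext f x|)
      = prodW x y * |f y - mlext f x| := by
    intro y hy
    rw [← mul_assoc, Real.mul_self_sqrt (prodW_nonneg hx hy)]
  have e2 : ∀ y ∈ cube n, (Real.sqrt (prodW x y))^2 = prodW x y := fun y hy =>
    Real.sq_sqrt (prodW_nonneg hx hy)
  have e3 : ∀ y ∈ cube n, (Real.sqrt (prodW x y) * |f y - mlext f x|)^2
      = prodW x y * (f y - mlext f x)^2 := by
    intro y hy
    rw [mul_pow, Real.sq_sqrt (prodW_nonneg hx hy), sq_abs]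
  rw [Finset.sum_congr rfl e1, Finset.sum_congr rfl e2, Finset.sum_congr rfl e3,
    sum_prodW, one_mul] at cs
  have hvar := variance hx hLb
  have hnn : 0 ≤ ∑ y ∈ cube n, prodW x y * |f y - mlext f x| :=
    Finset.sum_nonneg fun y hy => mul_nonneg (prodW_nonneg hx hy) (abs_nonneg _)
  have hrhs : (0:ℝ) ≤ Real.sqrt n * L := mul_nonneg (Real.sqrt_nonneg _) hL0
  have hsq : (Real.sqrt n * L)^2 = n * L^2 := by
    rw [mul_pow, Real.sq_sqrt (Nat.cast_nonneg n)]
  nlinarith [cs, hvar]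
end StepSec


lemma deriv_lip {h' h'' : ℝ → ℝ} {B : ℝ} (hd2 : ∀ x, HasDerivAt h' (h'' x) x)
    (hB : ∀ x, |h'' x| ≤ B) : ∀ s t : ℝ, |h' s - h' t| ≤ B * |s - t| := by
  intro s t
  have := convex_univ.norm_image_sub_le_of_norm_hasDerivWithin_le (f := h') (f' := h'')
    (s := (Set.univ : Set ℝ)) (fun u _ => (hd2 u).hasDerivWithinAt)
    (fun u _ => by rw [Real.norm_eq_abs]; exact hB u) (Set.mem_univ t)
    (Set.mem_univ s)
  simpa [Real.norm_eq_abs] using this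

lemma taylor_upper {h h' h'' : ℝ → ℝ} {B : ℝ} (hd1 : ∀ x, HasDerivAt h (h' x) x)
    (hd2 : ∀ x, HasDerivAt h' (h'' x) x) (hB : ∀ x, |h'' x| ≤ B) (c a : ℝ) :
    h a - h c - h' c * (a - c) ≤ B / 2 * (a - c) ^ 2 := by
  have hlip := deriv_lip hd2 hB
  set g : ℝ → ℝ := fun t => h t - h' c * t - B / 2 * (t - c) ^ 2 with hg
  have hg' : ∀ t, HasDerivAt g (h' t - h' c - B * (t - c)) t := by
    intro t
    have h1 : HasDerivAt (fun t : ℝ => h' c * t) (h' c) t := by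
      simpa using (hasDerivAt_id t).const_mul (h' c)
    have h2 : HasDerivAt (fun t : ℝ => B / 2 * (t - c) ^ 2) (B * (t - c)) t := by
      have := (((hasDerivAt_id t).sub_const c).pow 2).const_mul (B / 2)
      exact this.congr_deriv (by norm_num; ring)
    exact ((hd1 t).sub h1).sub h2
  have hderiv : ∀ t, deriv g t = h' t - h' c - B * (t - c) := fun t => (hg' t).deriv
  have hcont : ∀ s : Set ℝ, ContinuousOn g s := fun s =>
    fun t _ => (hg' t).continuousAt.continuousWithinAt
  have hgoal : g a ≤ g c := by
    rcases le_total c a with hca | hac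
    · have hanti : AntitoneOn g (Set.Ici c) := by
        refine antitoneOn_of_deriv_nonpos (convex_Ici c) (hcont _) ?_ ?_
        · intro t ht
          exact ((hg' t).differentiableAt).differentiableWithinAt
        · intro t ht
          rw [interior_Ici] at ht
          rw [hderiv]
          have := hlip t c
          have htc : c ≤ t := le_of_lt ht
          have : h' t - h' c ≤ B * (t - c) := by
            calc h' t - h' c ≤ |h' t - h' c| := le_abs_self _
              _ ≤ B * |t - c| := hlip t c
              _ = B * (t - c) := by rw [abs_of_nonneg (by linarith)]
          linarith
      exact hanti (Set.self_mem_Ici) hca hca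
    · have hmono : MonotoneOn g (Set.Iic c) := by
        refine monotoneOn_of_deriv_nonneg (convex_Iic c) (hcont _) ?_ ?_
        · intro t ht
          exact ((hg' t).differentiableAt).differentiableWithinAt
        · intro t ht
          rw [interior_Iic] at ht
          rw [hderiv]
          have htc : t ≤ c := le_of_lt ht
          have : h' c - h' t ≤ B * (c - t) := by
            calc h' c - h' t ≤ |h' c - h' t| := le_abs_self _
              _ ≤ B * |c - t| := hlip c t
              _ = B * (c - t) := by rw [abs_of_nonneg (by linarith)]
          linarith
      exact hmono hac (Set.self_mem_Iic) hac
  simp only [hg] at hgoal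
  nlinarith [hgoal]

lemma taylor_bound {h h' h'' : ℝ → ℝ} {B : ℝ} (hd1 : ∀ x, HasDerivAt h (h' x) x)
    (hd2 : ∀ x, HasDerivAt h' (h'' x) x) (hB : ∀ x, |h'' x| ≤ B) (c a : ℝ) :
    |h a - h c - h' c * (a - c)| ≤ B / 2 * (a - c) ^ 2 := by
  rw [abs_le]
  constructor
  · have := taylor_upper (h := fun t => -h t) (h' := fun t => -h' t) (h'' := fun t => -h'' t)
      (B := B) (fun t => (hd1 t).neg) (fun t => (hd2 t).neg)
      (fun t => by rw [abs_neg]; exact hB t) c a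
    linarith
  · exact taylor_upper hd1 hd2 hB c a

lemma pointwise_bound {n : ℕ} {f : (Fin n → ℝ) → ℝ} {L B : ℝ}
    {h h' h'' : ℝ → ℝ} (hd1 : ∀ x, HasDerivAt h (h' x) x)
    (hd2 : ∀ x, HasDerivAt h' (h'' x) x) (hB' : ∀ t, |h'' t| ≤ B) (hB0 : 0 ≤ B)
    (hLb : ∀ (i : Fin n), ∀ y ∈ cube n, |dd f i y| ≤ L)
    (i : Fin n) {y : Fin n → ℝ} (hy : y ∈ cube n) (F : ℝ) :
    |dd (h ∘ f) i y - h' F * dd f i y| ≤ B * L ^ 2 + B * L * |f y - F| := by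
  set a := f (Function.update y i 1) with ha
  set b := f (Function.update y i (-1)) with hb
  have hddf : dd f i y = (a - b) / 2 := rfl
  have hddh : dd (h ∘ f) i y = (h a - h b) / 2 := rfl
  have hdL : |(a - b) / 2| ≤ L := by rw [← hddf]; exact hLb i y hy
  have hL0 : 0 ≤ L := le_trans (abs_nonneg _) hdL
  have hfy : f y = a ∨ f y = b := by
    rcases mem_cube.1 hy i with h1 | h1
    · right; rw [hb, ← h1, Function.update_eq_self]
    · left; rw [ha, ← h1, Function.update_eq_self]
  have h1 : |dd (h ∘ f) i y - h' (f y) * dd f i y| ≤ B * L ^ 2 := by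
    have hsq : ((a - b) / 2) ^ 2 ≤ L ^ 2 := by
      nlinarith [le_abs_self ((a-b)/2), neg_abs_le ((a-b)/2), abs_nonneg ((a-b)/2)]
    rcases hfy with hc | hc
    · have ht := taylor_bound hd1 hd2 hB' a b
      have e : dd (h ∘ f) i y - h' (f y) * dd f i y
          = -(1/2) * (h b - h a - h' a * (b - a)) := by
        rw [hddh, hddf, hc]; ring
      rw [e, abs_mul]
      have : |(-(1/2) : ℝ)| = 1/2 := by norm_num
      rw [this]
      nlinarith [ht]
    · have ht := taylor_bound hd1 hd2 hB' b a
      have e : dd (h ∘ f) i y - h' (f y) * dd f i y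
          = (1/2) * (h a - h b - h' b * (a - b)) := by
        rw [hddh, hddf, hc]; ring
      rw [e, abs_mul]
      have : |((1/2) : ℝ)| = 1/2 := by norm_num
      rw [this]
      nlinarith [ht]
  have h2 : |(h' (f y) - h' F) * dd f i y| ≤ B * L * |f y - F| := by
    rw [abs_mul]
    calc |h' (f y) - h' F| * |dd f i y| ≤ (B * |f y - F|) * L := by
          refine mul_le_mul (deriv_lip hd2 hB' _ _) (hLb i y hy) (abs_nonneg _) ?_
          positivity
      _ = B * L * |f y - F| := by ring
  calc |dd (h ∘ f) i y - h' F * dd f i y|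
      = |(dd (h ∘ f) i y - h' (f y) * dd f i y) + (h' (f y) - h' F) * dd f i y| := by
        congr 1; ring
    _ ≤ |dd (h ∘ f) i y - h' (f y) * dd f i y| + |(h' (f y) - h' F) * dd f i y| := abs_add_le _ _
    _ ≤ B * L ^ 2 + B * L * |f y - F| := add_le_add h1 h2

lemma coord_bound {n : ℕ} {f : (Fin n → ℝ) → ℝ} {x : Fin n → ℝ} {L B : ℝ}
    {h h' h'' : ℝ → ℝ} (hd1 : ∀ x, HasDerivAt h (h' x) x)
    (hd2 : ∀ x, HasDerivAt h' (h'' x) x) (hB' : ∀ t, |h'' t| ≤ B) (hB0 : 0 ≤ B)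
    (hx : ∀ i, |x i| ≤ 1) (hLb : ∀ (i : Fin n), ∀ y ∈ cube n, |dd f i y| ≤ L)
    (hL0 : 0 ≤ L) (i : Fin n) :
    |mlext (dd (h ∘ f) i) x - h' (mlext f x) * mlext (dd f i) x|
      ≤ B * L ^ 2 + B * L * (Real.sqrt n * L) := by
  set F := mlext f x with hF
  have hrepr : mlext (dd (h ∘ f) i) x - h' F * mlext (dd f i) x
      = ∑ y ∈ cube n, prodW x y * (dd (h ∘ f) i y - h' F * dd f i y) := by
    rw [lemA, lemA, Finset.mul_sum, ← Finset.sum_sub_distrib]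
    exact Finset.sum_congr rfl fun y _ => by ring
  rw [hrepr]
  calc |∑ y ∈ cube n, prodW x y * (dd (h ∘ f) i y - h' F * dd f i y)|
      ≤ ∑ y ∈ cube n, |prodW x y * (dd (h ∘ f) i y - h' F * dd f i y)| :=
        Finset.abs_sum_le_sum_abs _ _
    _ ≤ ∑ y ∈ cube n, prodW x y * (B * L ^ 2 + B * L * |f y - F|) := by
        refine Finset.sum_le_sum fun y hy => ?_
        rw [abs_mul, abs_of_nonneg (prodW_nonneg hx hy)]
        exact mul_le_mul_of_nonneg_left
          (pointwise_bound hd1 hd2 hB' hB0 hLb i hy F) (prodW_nonneg hx hy)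
    _ = B * L ^ 2 * (∑ y ∈ cube n, prodW x y)
        + B * L * ∑ y ∈ cube n, prodW x y * |f y - F| := by
        rw [Finset.mul_sum, Finset.mul_sum, ← Finset.sum_add_distrib]
        exact Finset.sum_congr rfl fun y _ => by ring
    _ ≤ B * L ^ 2 + B * L * (Real.sqrt n * L) := by
        rw [sum_prodW, mul_one]
        have := absdev hx hLb hL0
        have hBL : 0 ≤ B * L := mul_nonneg hB0 hL0
        nlinarith [this]

lemma lip_bddAbove {n : ℕ} (f : (Fin n → ℝ) → ℝ) :
    BddAbove {a | ∃ i : Fin n, ∃ y ∈ cube n, a = |dd f i y|} := by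
  have hsub : {a | ∃ i : Fin n, ∃ y ∈ cube n, a = |dd f i y|}
      ⊆ (fun p : Fin n × (Fin n → ℝ) => |dd f p.1 p.2|) ''
        ((Set.univ : Set (Fin n)) ×ˢ (↑(cube n) : Set (Fin n → ℝ))) := by
    rintro a ⟨i, y, hy, rfl⟩
    exact ⟨(i, y), ⟨Set.mem_univ i, hy⟩, rfl⟩
  exact (((Set.finite_univ).prod (cube n).finite_toSet).image _).bddAbove.mono hsub

lemma lip_ge {n : ℕ} (f : (Fin n → ℝ) → ℝ) (i : Fin n) {y : Fin n → ℝ} (hy : y ∈ cube n) :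
    |dd f i y| ≤ lip f :=
  le_csSup (lip_bddAbove f) ⟨i, y, hy, rfl⟩


theorem chain_rule_extension (n : ℕ) (f : (Fin n → ℝ) → ℝ)
    (L : ℝ) (hL : lip f = L)
    (h h' h'' : ℝ → ℝ) (B : ℝ)
    (hd1 : ∀ x, HasDerivAt h (h' x) x)
    (hd2 : ∀ x, HasDerivAt h' (h'' x) x)
    (hB : ∀ x, |h'' x| < B)
    (x : Fin n → ℝ) (hx : ∀ i, x i ∈ Set.Icc (-1 : ℝ) 1) :
    onorm (fun i => mlgrad (h ∘ f) x i - h' (mlext f x) * mlgrad f x i) ≤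
      2 * B * L ^ 2 * (n : ℝ) ^ ((3 : ℝ) / 2) := by
  have hB' : ∀ t, |h'' t| ≤ B := fun t => (hB t).le
  have hB0 : 0 ≤ B := le_trans (abs_nonneg _) (hB' 0)
  rcases Nat.eq_zero_or_pos n with hn | hn
  · subst hn
    have h0 : onorm (fun i => mlgrad (h ∘ f) x i - h' (mlext f x) * mlgrad f x i) = 0 := by
      simp [onorm]
    rw [h0, show ((0:ℕ):ℝ) = (0:ℝ) from by norm_num,
      Real.zero_rpow (by norm_num : (3:ℝ)/2 ≠ 0), mul_zero]
  · subst hL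
    set L := lip f with hLdef
    have hx' : ∀ i, |x i| ≤ 1 := fun i => abs_le.2 ⟨(hx i).1, (hx i).2⟩
    have hLb : ∀ (i : Fin n), ∀ y ∈ cube n, |dd f i y| ≤ L := fun i y hy => lip_ge f i hy
    have hL0 : 0 ≤ L := by
      have i0 : Fin n := ⟨0, hn⟩
      exact le_trans (abs_nonneg _) (hLb i0 _ one_mem_cube)
    have hone : onorm (fun i => mlgrad (h ∘ f) x i - h' (mlext f x) * mlgrad f x i)
        = ∑ i, |mlext (dd (h ∘ f) i) x - h' (mlext f x) * mlext (dd f i) x| := rfl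
    rw [hone]
    have hsn1 : (1:ℝ) ≤ Real.sqrt n := by
      rw [show (1:ℝ) = Real.sqrt 1 from (Real.sqrt_one).symm]
      exact Real.sqrt_le_sqrt (by exact_mod_cast hn)
    have hn1 : (1:ℝ) ≤ (n:ℝ) := by exact_mod_cast hn
    have h32 : ((n : ℝ)) ^ ((3:ℝ)/2) = (n:ℝ) * Real.sqrt n := by
      rw [show (3:ℝ)/2 = 1 + 1/2 by norm_num, Real.rpow_add (by linarith), Real.rpow_one,
        ← Real.sqrt_eq_rpow]
    calc ∑ i, |mlext (dd (h ∘ f) i) x - h' (mlext f x) * mlext (dd f i) x|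
        ≤ ∑ _i : Fin n, (B * L ^ 2 + B * L * (Real.sqrt n * L)) :=
          Finset.sum_le_sum fun i _ => coord_bound hd1 hd2 hB' hB0 hx' hLb hL0 i
      _ = n * (B * L ^ 2 + B * L * (Real.sqrt n * L)) := by
          rw [Finset.sum_const, Finset.card_univ, Fintype.card_fin, nsmul_eq_mul]
      _ ≤ 2 * B * L ^ 2 * (n : ℝ) ^ ((3:ℝ)/2) := by
          rw [h32]
          have key : 0 ≤ (Real.sqrt n - 1) * ((n:ℝ) * (B * L^2)) :=
            mul_nonneg (by linarith)
              (mul_nonneg (by linarith) (mul_nonneg hB0 (sq_nonneg L)))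
          nlinarith [key]

end Paper
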